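/- (Trace identity for the cross-covariance resolvent.) Let X ∈ ℝ^{n×dx}, Y ∈ ℝ^{n×dy}, S = Xᵀ·Y ∈ ℝ^{dx×dy}, Sx = X·Xᵀ ∈ ℝ^{n×n} and Sy = Y·Yᵀ ∈ ℝ^{n×n}. Let z ∈ ℝ be such that z²·I_{dx} − S·Sᵀ and z²·I_n − Sx^{1/2}·Sy·Sx^{1/2} are both invertible, where Sx^{1/2} is the positive semidefinite square root of Sx. Then Tr( X·(z²·I_{dx} − S·Sᵀ)⁻¹·Xᵀ ) = Tr( (z²·I_n − Sx^{1/2}·Sy·Sx^{1/2})⁻¹·Sx ). -/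
import Mathlib


open Matrix

lemma det_smul_one_sub_mul_comm {k : ℕ} (c : ℝ) (M N : Matrix (Fin k) (Fin k) ℝ) :
    (c • (1 : Matrix (Fin k) (Fin k) ℝ) - M * N).det =
      (c • (1 : Matrix (Fin k) (Fin k) ℝ) - N * M).det := by
  rcases eq_or_ne c 0 with h | h
  · simp only [h, zero_smul, zero_sub, det_neg, det_mul]
    ring
  · have h1 : c • (1 : Matrix (Fin k) (Fin k) ℝ) - M * N
        = c • ((1 : Matrix (Fin k) (Fin k) ℝ) - M * (c⁻¹ • N)) := by
      rw [smul_sub, Matrix.mul_smul, smul_smul, mul_inv_cancel₀ h, one_smul]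
    have h2 : c • (1 : Matrix (Fin k) (Fin k) ℝ) - N * M
        = c • ((1 : Matrix (Fin k) (Fin k) ℝ) - (c⁻¹ • N) * M) := by
      rw [smul_sub, Matrix.smul_mul, smul_smul, mul_inv_cancel₀ h, one_smul]
    rw [h1, h2, det_smul, det_smul, det_one_sub_mul_comm]

/-- Trace identity for the cross-covariance resolvent: with `S = XᵀY`, `Sx = XXᵀ`,
`Sy = YYᵀ` and `T = Sx^{1/2}` the psd square root of `Sx`,
`Tr(X·(z²I − SSᵀ)⁻¹·Xᵀ) = Tr((z²I − T·Sy·T)⁻¹·Sx)`. -/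
theorem trace_identity_cross_covariance_resolvent {n dx dy : ℕ}
    (X : Matrix (Fin n) (Fin dx) ℝ) (Y : Matrix (Fin n) (Fin dy) ℝ)
    (T : Matrix (Fin n) (Fin n) ℝ) (hT : T.PosSemidef) (hTsq : T * T = X * Xᵀ)
    (z : ℝ)
    (h1 : IsUnit (z ^ 2 • (1 : Matrix (Fin dx) (Fin dx) ℝ) - (Xᵀ * Y) * (Xᵀ * Y)ᵀ))
    (h2 : IsUnit (z ^ 2 • (1 : Matrix (Fin n) (Fin n) ℝ) - T * (Y * Yᵀ) * T)) :
    Matrix.trace (X * (z ^ 2 • (1 : Matrix (Fin dx) (Fin dx) ℝ) -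
        (Xᵀ * Y) * (Xᵀ * Y)ᵀ)⁻¹ * Xᵀ) =
      Matrix.trace ((z ^ 2 • (1 : Matrix (Fin n) (Fin n) ℝ) -
        T * (Y * Yᵀ) * T)⁻¹ * (X * Xᵀ)) := by
  set Sy : Matrix (Fin n) (Fin n) ℝ := Y * Yᵀ with hSy
  set A : Matrix (Fin dx) (Fin dx) ℝ :=
    z ^ 2 • (1 : Matrix (Fin dx) (Fin dx) ℝ) - (Xᵀ * Y) * (Xᵀ * Y)ᵀ with hA
  set B : Matrix (Fin n) (Fin n) ℝ :=
    z ^ 2 • (1 : Matrix (Fin n) (Fin n) ℝ) - T * Sy * T with hB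
  set C : Matrix (Fin n) (Fin n) ℝ :=
    z ^ 2 • (1 : Matrix (Fin n) (Fin n) ℝ) - T * T * Sy with hC
  -- C is a unit
  have hCunit : IsUnit C := by
    rw [Matrix.isUnit_iff_isUnit_det] at h2 ⊢
    have hdet : C.det = B.det := by
      rw [hC, hB, show T * T * Sy = T * (T * Sy) from Matrix.mul_assoc T T Sy,
        det_smul_one_sub_mul_comm (z ^ 2) T (T * Sy), Matrix.mul_assoc]
    rw [hdet]; exact h2
  -- intertwining: X * A = C * X
  have hXA : X * A = C * X := by
    rw [hA, hC, Matrix.mul_sub, Matrix.sub_mul, Matrix.mul_smul, Matrix.smul_mul,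
      Matrix.mul_one, Matrix.one_mul, Matrix.transpose_mul, Matrix.transpose_transpose]
    congr 1
    calc X * (Xᵀ * Y * (Yᵀ * X)) = X * Xᵀ * Sy * X := by
          rw [hSy]; simp only [Matrix.mul_assoc]
      _ = T * T * Sy * X := by rw [hTsq]
  -- hence X * A⁻¹ = C⁻¹ * X
  have hXAinv : X * A⁻¹ = C⁻¹ * X := by
    have h3 : X = C * X * A⁻¹ := by
      rw [← hXA, Matrix.mul_assoc, Matrix.mul_nonsing_inv _ ((Matrix.isUnit_iff_isUnit_det A).mp h1),
        Matrix.mul_one]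
    calc X * A⁻¹ = C⁻¹ * C * (X * A⁻¹) := by
          rw [Matrix.nonsing_inv_mul _ ((Matrix.isUnit_iff_isUnit_det C).mp hCunit), Matrix.one_mul]
      _ = C⁻¹ * X := by rw [Matrix.mul_assoc, ← Matrix.mul_assoc C, ← h3]
  -- intertwining: C * T = T * B
  have hCT : C * T = T * B := by
    rw [hC, hB]
    rw [Matrix.sub_mul, Matrix.mul_sub, Matrix.smul_mul, Matrix.mul_smul,
      Matrix.one_mul, Matrix.mul_one]
    congr 1
    noncomm_ring
  have hTBinv : T * B⁻¹ = C⁻¹ * T := by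
    have h3 : T = C⁻¹ * T * B := by
      rw [Matrix.mul_assoc, ← hCT, ← Matrix.mul_assoc,
        Matrix.nonsing_inv_mul _ ((Matrix.isUnit_iff_isUnit_det C).mp hCunit), Matrix.one_mul]
    calc T * B⁻¹ = C⁻¹ * T * B * B⁻¹ := by rw [← h3]
      _ = C⁻¹ * T := by
          rw [Matrix.mul_assoc, Matrix.mul_nonsing_inv _ ((Matrix.isUnit_iff_isUnit_det B).mp h2),
            Matrix.mul_one]
  rw [hXAinv]
  calc Matrix.trace (C⁻¹ * X * Xᵀ) = Matrix.trace (C⁻¹ * (T * T)) := by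
        rw [Matrix.mul_assoc, ← hTsq]
    _ = Matrix.trace (C⁻¹ * T * T) := by rw [Matrix.mul_assoc]
    _ = Matrix.trace (T * B⁻¹ * T) := by rw [hTBinv]
    _ = Matrix.trace (B⁻¹ * T * T) := by
        rw [Matrix.mul_assoc T B⁻¹ T, Matrix.trace_mul_comm T (B⁻¹ * T)]
    _ = Matrix.trace (B⁻¹ * (X * Xᵀ)) := by rw [Matrix.mul_assoc, hTsq]
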